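/- Let R be the hierarchical Kondo beta function on ℝ⁴ (as in the previous context). Let x₀ be the real root of 4 - 19x - 22x² - 107x³ = 0. Then ℓ* = (-x₀(1+5x₀)/(1-4x₀), x₀/3, 1/3, x₀/18) is a fixed point of R. -/

import Mathlib

noncomputable def kondoR (l : ℝ × ℝ × ℝ × ℝ) : ℝ × ℝ × ℝ × ℝ :=
  let l0 := l.1; let l1 := l.2.1; let l2 := l.2.2.1; let l3 := l.2.2.2
  let C := 1 + 3*l0^2 + 9*l1^2 + 9*l2^2 + 324*l3^2
  ( (l0 + 18*l0*l3 + 3*l0*l2 + 3*l0*l1 - 2*l0^2) / C,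
    ((1/2)*l1 + 9*l2*l3 + (1/4)*l0^2) / C,
    (2*l2 + 36*l1*l3 + l0^2) / C,
    ((1/2)*l3 + (1/4)*l1*l2 + (1/24)*l0^2) / C )

theorem nontrivial_fixed_point (x₀ : ℝ)
    (hroot : 4 - 19*x₀ - 22*x₀^2 - 107*x₀^3 = 0) :
    kondoR (-x₀*(1+5*x₀)/(1-4*x₀), x₀/3, 1/3, x₀/18)
      = (-x₀*(1+5*x₀)/(1-4*x₀), x₀/3, 1/3, x₀/18) := by
  have hd : (1:ℝ) - 4*x₀ ≠ 0 := by
    intro h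
    have hx : x₀ = 1/4 := by linarith
    rw [hx] at hroot; norm_num at hroot
  have hC : (1 + 3*(-x₀*(1+5*x₀)/(1-4*x₀))^2 + 9*(x₀/3)^2 + 9*((1:ℝ)/3)^2 + 324*(x₀/18)^2) ≠ 0 := by positivity
  unfold kondoR
  simp only [Prod.mk.injEq]
  refine ⟨?_, ?_, ?_, ?_⟩ <;> rw [div_eq_iff hC] <;> field_simp
  all_goals have hd' : 1 - x₀ * 4 ≠ 0 := by intro h; exact hd (by linarith)
  all_goals field_simp
  · linear_combination (-2916*x₀^2 - 14580*x₀^3) * hroot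
  · linear_combination (-5832*x₀ + 23328*x₀^2) * hroot
  · ring
  · linear_combination (-139968*x₀ + 559872*x₀^2) * hroot
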